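/- arXiv:1103.2600 — 6 statements merged into one kernel-verified Lean document; each statement's English description precedes it below -/
import Mathlib

section
/- Let G be a finitely generated group and let i ≥ 1. Then the (i+1)-st term γ_{i+1}(G) of the lower central series of G is finite if and only if the quotient G/Z_i(G) by the i-th term of the upper central series of G is finite. -/
open Subgroup QuotientGroup
open scoped commutatorElement

section Aux

variable {G : Type*} [Group G]

/-- The three subgroups lemma, via the Hall–Witt identity. -/
private theorem aux_three_subgroups {A B C N : Subgroup G} [hN : N.Normal]
    (h1 : ⁅⁅B, C⁆, A⁆ ≤ N) (h2 : ⁅⁅C, A⁆, B⁆ ≤ N) : ⁅⁅A, B⁆, C⁆ ≤ N := by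
  rw [commutator_le]
  intro g hg z hz
  revert g
  let D : Subgroup G :=
    { carrier := {g | ⁅g, z⁆ ∈ N}
      one_mem' := by
        show ⁅(1 : G), z⁆ ∈ N
        rw [commutatorElement_one_left]
        exact one_mem N
      mul_mem' := by
        intro a b ha hb
        have e : ⁅a * b, z⁆ = (a * ⁅b, z⁆ * a⁻¹) * ⁅a, z⁆ := by
          simp only [commutatorElement_def]; group
        show ⁅a * b, z⁆ ∈ N
        rw [e]
        exact mul_mem (hN.conj_mem _ hb a) ha
      inv_mem' := by
        intro a ha
        have e : ⁅a⁻¹, z⁆ = a⁻¹ * ⁅a, z⁆⁻¹ * a⁻¹⁻¹ := by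
          simp only [commutatorElement_def]; group
        show ⁅a⁻¹, z⁆ ∈ N
        rw [e]
        exact hN.conj_mem _ (inv_mem ha) a⁻¹ }
  have hAB : ⁅A, B⁆ ≤ D := by
    rw [commutator_le]
    intro a ha b hb
    show ⁅⁅a, b⁆, z⁆ ∈ N
    have e : ⁅⁅a, b⁆, z⁆ =
        a * ((b * ⁅⁅b⁻¹, z⁆, a⁻¹⁆ * b⁻¹)⁻¹ * (z * ⁅⁅z⁻¹, a⁻¹⁆, b⁆ * z⁻¹)⁻¹) * a⁻¹ := by
      simp only [commutatorElement_def]; group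
    rw [e]
    have hT2N : z * ⁅⁅z⁻¹, a⁻¹⁆, b⁆ * z⁻¹ ∈ N := hN.conj_mem _ (h2 (commutator_mem_commutator
      (commutator_mem_commutator (inv_mem hz) (inv_mem ha)) hb)) z
    have hT3N : b * ⁅⁅b⁻¹, z⁆, a⁻¹⁆ * b⁻¹ ∈ N := hN.conj_mem _ (h1 (commutator_mem_commutator
      (commutator_mem_commutator (inv_mem hb) hz) (inv_mem ha))) b
    exact hN.conj_mem _ (mul_mem (inv_mem hT3N) (inv_mem hT2N)) a
  intro g hg
  exact hAB hg

/-- `⁅⊤, Z_m⁆ ≤ Z_{m-1}`. -/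
private theorem aux_top_ucs (m : ℕ) :
    ⁅(⊤ : Subgroup G), Subgroup.upperCentralSeries G m⁆ ≤ Subgroup.upperCentralSeries G (m - 1) := by
  cases m with
  | zero => simp [Subgroup.upperCentralSeries_zero]
  | succ m =>
      rw [commutator_comm, commutator_le]
      intro x hx y _
      simpa [commutatorElement_def, mul_assoc] using (Subgroup.mem_upperCentralSeries_succ_iff.mp hx y)

/-- `⁅γ_{n+1}, Z_m⁆ ≤ Z_{m-n-1}` (mathlib indexing: `Subgroup.lowerCentralSeries (⊤ : Subgroup G) n = γ_{n+1}`). -/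
private theorem aux_lcs_ucs (n : ℕ) : ∀ m : ℕ,
    ⁅Subgroup.lowerCentralSeries (⊤ : Subgroup G) n, Subgroup.upperCentralSeries G m⁆ ≤ Subgroup.upperCentralSeries G (m - (n + 1)) := by
  induction n with
  | zero =>
      intro m
      rw [Subgroup.lowerCentralSeries_zero]
      exact aux_top_ucs m
  | succ n ih =>
      intro m
      have h : Subgroup.lowerCentralSeries (⊤ : Subgroup G) (n + 1) = ⁅Subgroup.lowerCentralSeries (⊤ : Subgroup G) n, ⊤⁆ := rfl
      rw [h]
      have hsub1 : (m - 1) - (n + 1) = m - (n + 1 + 1) := by omega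
      have hsub2 : (m - (n + 1)) - 1 = m - (n + 1 + 1) := by omega
      apply aux_three_subgroups
      · calc ⁅⁅(⊤ : Subgroup G), Subgroup.upperCentralSeries G m⁆, Subgroup.lowerCentralSeries (⊤ : Subgroup G) n⁆
            ≤ ⁅Subgroup.upperCentralSeries G (m - 1), Subgroup.lowerCentralSeries (⊤ : Subgroup G) n⁆ :=
              commutator_mono (aux_top_ucs m) le_rfl
          _ = ⁅Subgroup.lowerCentralSeries (⊤ : Subgroup G) n, Subgroup.upperCentralSeries G (m - 1)⁆ := commutator_comm _ _
          _ ≤ Subgroup.upperCentralSeries G ((m - 1) - (n + 1)) := ih (m - 1)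
          _ = Subgroup.upperCentralSeries G (m - (n + 1 + 1)) := by rw [hsub1]
      · calc ⁅⁅Subgroup.upperCentralSeries G m, Subgroup.lowerCentralSeries (⊤ : Subgroup G) n⁆, (⊤ : Subgroup G)⁆
            = ⁅⁅Subgroup.lowerCentralSeries (⊤ : Subgroup G) n, Subgroup.upperCentralSeries G m⁆, (⊤ : Subgroup G)⁆ := by
              rw [commutator_comm (Subgroup.upperCentralSeries G m)]
          _ ≤ ⁅Subgroup.upperCentralSeries G (m - (n + 1)), (⊤ : Subgroup G)⁆ :=
              commutator_mono (ih m) le_rfl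
          _ = ⁅(⊤ : Subgroup G), Subgroup.upperCentralSeries G (m - (n + 1))⁆ := commutator_comm _ _
          _ ≤ Subgroup.upperCentralSeries G ((m - (n + 1)) - 1) := aux_top_ucs _
          _ = Subgroup.upperCentralSeries G (m - (n + 1 + 1)) := by rw [hsub2]

/-- Elements of `γ_{n+1}` commute with elements of `Z_{n+1}`. -/
private theorem aux_commute_lcs_ucs {n : ℕ} {h z : G} (hh : h ∈ Subgroup.lowerCentralSeries (⊤ : Subgroup G) n)
    (hz : z ∈ Subgroup.upperCentralSeries G (n + 1)) : Commute h z := by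
  have h2 := aux_lcs_ucs n (n + 1) (commutator_mem_commutator hh hz)
  rw [Nat.sub_self, Subgroup.upperCentralSeries_zero, mem_bot] at h2
  exact commutatorElement_eq_one_iff_commute.mp h2

/-- The image of the lower central series under a surjective homomorphism. -/
private theorem aux_map_lcs {G' : Type*} [Group G'] (f : G →* G') (hf : Function.Surjective f) :
    ∀ n : ℕ, (Subgroup.lowerCentralSeries (⊤ : Subgroup G) n).map f = Subgroup.lowerCentralSeries (⊤ : Subgroup G') n := by
  intro n
  induction n with
  | zero =>
      rw [Subgroup.lowerCentralSeries_zero, Subgroup.lowerCentralSeries_zero]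
      exact map_top_of_surjective f hf
  | succ n ih =>
      show Subgroup.map f ⁅Subgroup.lowerCentralSeries (⊤ : Subgroup G) n, ⊤⁆ = ⁅Subgroup.lowerCentralSeries (⊤ : Subgroup G') n, ⊤⁆
      rw [map_commutator, ih, map_top_of_surjective f hf]

/-- `G ⧸ Z_{n+1}(G) ≃* (G ⧸ Z(G)) ⧸ Z_n(G ⧸ Z(G))`. -/
private noncomputable def auxQuotEquiv (G : Type*) [Group G] (n : ℕ) :
    (G ⧸ Subgroup.upperCentralSeries G (n + 1)) ≃*
      ((G ⧸ center G) ⧸ Subgroup.upperCentralSeries (G ⧸ center G) n) := by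
  have hle : center G ≤ Subgroup.upperCentralSeries G (n + 1) := by
    rw [← Subgroup.upperCentralSeries_one]
    exact Subgroup.upperCentralSeries_mono _ (Nat.succ_le_succ (Nat.zero_le n))
  have hmap : (Subgroup.upperCentralSeries G (n + 1)).map (mk' (center G)) =
      Subgroup.upperCentralSeries (G ⧸ center G) n := by
    rw [← Subgroup.comap_upperCentralSeries_quotient_center n,
      map_comap_eq_self_of_surjective (mk'_surjective _)]
  exact ((quotientQuotientEquivQuotient (center G) (Subgroup.upperCentralSeries G (n + 1)) hle).symm.trans
    (quotientMulEquivOfEq (by rw [hmap])))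

/-- Commutators are insensitive to central perturbation in the first slot. -/
private theorem aux_comm_left {g g' : G} (w : G) (h : g⁻¹ * g' ∈ center G) :
    ⁅g', w⁆ = ⁅g, w⁆ := by
  have hz := Subgroup.mem_center_iff.mp h
  have e1 : g' = g * (g⁻¹ * g') := by group
  have e2 : ⁅g * (g⁻¹ * g'), w⁆ = g * ((g⁻¹ * g') * w * (g⁻¹ * g')⁻¹) * g⁻¹ * w⁻¹ := by
    simp only [commutatorElement_def]; group
  have e3 : (g⁻¹ * g') * w * (g⁻¹ * g')⁻¹ = w := by
    rw [← hz w]; group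
  rw [e1, e2, e3, commutatorElement_def]

/-- Commutators with `γ_{n+1}` in the first slot are insensitive to `Z_{n+1}`-perturbation
in the second slot. -/
private theorem aux_comm_right {n : ℕ} {h : G} (hh : h ∈ Subgroup.lowerCentralSeries (⊤ : Subgroup G) n) {g g' : G}
    (hg : g⁻¹ * g' ∈ Subgroup.upperCentralSeries G (n + 1)) : ⁅h, g'⁆ = ⁅h, g⁆ := by
  have hc : Commute h (g⁻¹ * g') := aux_commute_lcs_ucs hh hg
  have e1 : g' = g * (g⁻¹ * g') := by group
  have e2 : ⁅h, g * (g⁻¹ * g')⁆ = h * g * ((g⁻¹ * g') * h⁻¹ * (g⁻¹ * g')⁻¹) * g⁻¹ := by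
    simp only [commutatorElement_def]; group
  have e3 : (g⁻¹ * g') * h⁻¹ * (g⁻¹ * g')⁻¹ = h⁻¹ := by
    rw [(hc.symm.inv_right).eq]; group
  rw [e1, e2, e3, commutatorElement_def]

universe u

/-- Baer's theorem: if `G ⧸ Z_n(G)` is finite, then `γ_{n+1}(G)` is finite. -/
private theorem aux_baer : ∀ (n : ℕ) (G : Type u) [Group G],
    Finite (G ⧸ Subgroup.upperCentralSeries G n) → Finite (Subgroup.lowerCentralSeries (⊤ : Subgroup G) n) := by
  intro n
  induction n with
  | zero =>
      intro G _ hfin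
      haveI : Finite (G ⧸ (⊥ : Subgroup G)) := by
        rw [← Subgroup.upperCentralSeries_zero]; exact hfin
      haveI : Finite G := Finite.of_equiv _ (QuotientGroup.quotientBot (G := G)).toEquiv
      rw [Subgroup.lowerCentralSeries_zero]
      infer_instance
  | succ n ih =>
      intro G _ hfin
      let π : G →* G ⧸ center G := mk' (center G)
      haveI hbar : Finite ((G ⧸ center G) ⧸ Subgroup.upperCentralSeries (G ⧸ center G) n) :=
        Finite.of_equiv _ (auxQuotEquiv G n).toEquiv
      haveI hlcsbar : Finite (Subgroup.lowerCentralSeries (⊤ : Subgroup (G ⧸ center G)) n) := ih _ hbar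
      have hmapH : (Subgroup.lowerCentralSeries (⊤ : Subgroup G) n).map π = Subgroup.lowerCentralSeries (⊤ : Subgroup (G ⧸ center G)) n :=
        aux_map_lcs π (mk'_surjective _) n
      haveI hM₀fin : Finite ((Subgroup.lowerCentralSeries (⊤ : Subgroup G) n).map π) := by
        rw [hmapH]; exact hlcsbar
      -- preimage choice function
      have hpre : ∀ x : (Subgroup.lowerCentralSeries (⊤ : Subgroup G) n).map π,
          ∃ g, g ∈ Subgroup.lowerCentralSeries (⊤ : Subgroup G) n ∧ π g = ↑x := fun x => mem_map.mp x.2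
      let pre : (Subgroup.lowerCentralSeries (⊤ : Subgroup G) n).map π → G := fun x => (hpre x).choose
      have hpre1 : ∀ x, pre x ∈ Subgroup.lowerCentralSeries (⊤ : Subgroup G) n := fun x => (hpre x).choose_spec.1
      have hpre2 : ∀ x, π (pre x) = ↑x := fun x => (hpre x).choose_spec.2
      have hker : ∀ g g' : G, π g = π g' → g⁻¹ * g' ∈ center G := by
        intro g g' hgg
        refine (QuotientGroup.eq_one_iff _).mp ?_
        show π (g⁻¹ * g') = 1
        rw [map_mul, map_inv, hgg]
        exact inv_mul_cancel _
      -- m such that h ^ m is central for every h ∈ Subgroup.lowerCentralSeries (⊤ : Subgroup G) n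
      have hpow : ∀ h ∈ Subgroup.lowerCentralSeries (⊤ : Subgroup G) n,
          h ^ (Nat.card ((Subgroup.lowerCentralSeries (⊤ : Subgroup G) n).map π)) ∈ center G := by
        intro h hh
        have h1 : (⟨π h, mem_map_of_mem π hh⟩ : (Subgroup.lowerCentralSeries (⊤ : Subgroup G) n).map π)
            ^ (Nat.card ((Subgroup.lowerCentralSeries (⊤ : Subgroup G) n).map π)) = 1 := pow_card_eq_one'
        have h2 : (π h) ^ (Nat.card ((Subgroup.lowerCentralSeries (⊤ : Subgroup G) n).map π)) = 1 := by
          simpa using congrArg Subtype.val h1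
        refine (QuotientGroup.eq_one_iff _).mp ?_
        show π (h ^ (Nat.card ((Subgroup.lowerCentralSeries (⊤ : Subgroup G) n).map π))) = 1
        rw [map_pow]
        exact h2
      have hHH : ∀ {a b : G}, a ∈ Subgroup.lowerCentralSeries (⊤ : Subgroup G) n → b ∈ Subgroup.lowerCentralSeries (⊤ : Subgroup G) n →
          ⁅a, b⁆ ∈ Subgroup.lowerCentralSeries (⊤ : Subgroup G) n := by
        intro a b ha hb
        simp only [commutatorElement_def]
        exact mul_mem (mul_mem (mul_mem ha hb) (inv_mem ha)) (inv_mem hb)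
      -- Schur: ⁅H, H⁆ is finite, where H = Subgroup.lowerCentralSeries (⊤ : Subgroup G) n
      haveI hcommSetFin : Finite (commutatorSet (Subgroup.lowerCentralSeries (⊤ : Subgroup G) n)) := by
        let F : ((Subgroup.lowerCentralSeries (⊤ : Subgroup G) n).map π) × ((Subgroup.lowerCentralSeries (⊤ : Subgroup G) n).map π) →
            Subgroup.lowerCentralSeries (⊤ : Subgroup G) n := fun p =>
          ⟨⁅pre p.1, pre p.2⁆, hHH (hpre1 p.1) (hpre1 p.2)⟩
        have hsub : commutatorSet (Subgroup.lowerCentralSeries (⊤ : Subgroup G) n) ⊆ Set.range F := by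
          rintro c ⟨⟨a, ha⟩, ⟨b, hb⟩, rfl⟩
          refine ⟨(⟨π a, mem_map_of_mem π ha⟩, ⟨π b, mem_map_of_mem π hb⟩), ?_⟩
          apply Subtype.ext
          show ⁅pre _, pre _⁆ = ((⁅(⟨a, ha⟩ : Subgroup.lowerCentralSeries (⊤ : Subgroup G) n),
            (⟨b, hb⟩ : Subgroup.lowerCentralSeries (⊤ : Subgroup G) n)⁆ : Subgroup.lowerCentralSeries (⊤ : Subgroup G) n) : G)
          have hcoe : ((⁅(⟨a, ha⟩ : Subgroup.lowerCentralSeries (⊤ : Subgroup G) n),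
              (⟨b, hb⟩ : Subgroup.lowerCentralSeries (⊤ : Subgroup G) n)⁆ : Subgroup.lowerCentralSeries (⊤ : Subgroup G) n) : G) = ⁅a, b⁆ := rfl
          rw [hcoe]
          have e1 : ⁅pre ⟨π a, mem_map_of_mem π ha⟩, pre ⟨π b, mem_map_of_mem π hb⟩⁆ =
              ⁅a, pre ⟨π b, mem_map_of_mem π hb⟩⁆ :=
            aux_comm_left _ (hker a _ ((hpre2 ⟨π a, mem_map_of_mem π ha⟩).symm))
          have e2 : ⁅a, pre ⟨π b, mem_map_of_mem π hb⟩⁆ =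
              ⁅pre ⟨π b, mem_map_of_mem π hb⟩, a⁆⁻¹ := (commutatorElement_inv _ _).symm
          have e3 : ⁅pre ⟨π b, mem_map_of_mem π hb⟩, a⁆ = ⁅b, a⁆ :=
            aux_comm_left _ (hker b _ ((hpre2 ⟨π b, mem_map_of_mem π hb⟩).symm))
          rw [e1, e2, e3, commutatorElement_inv]
        exact Set.Finite.to_subtype ((Set.finite_range F).subset hsub)
      haveI hcommFin : Finite (_root_.commutator (Subgroup.lowerCentralSeries (⊤ : Subgroup G) n)) := inferInstance
      have hH'eq : ⁅Subgroup.lowerCentralSeries (⊤ : Subgroup G) n, Subgroup.lowerCentralSeries (⊤ : Subgroup G) n⁆ =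
          (_root_.commutator (Subgroup.lowerCentralSeries (⊤ : Subgroup G) n)).map (Subgroup.lowerCentralSeries (⊤ : Subgroup G) n).subtype := by
        rw [_root_.commutator_def, map_commutator, ← MonoidHom.range_eq_map,
          Subgroup.range_subtype]
      haveI hH'fin : Finite ↥(⁅Subgroup.lowerCentralSeries (⊤ : Subgroup G) n, Subgroup.lowerCentralSeries (⊤ : Subgroup G) n⁆ : Subgroup G) := by
        rw [hH'eq]
        have hs : Function.Surjective (fun c : _root_.commutator (Subgroup.lowerCentralSeries (⊤ : Subgroup G) n) =>
            (⟨(Subgroup.lowerCentralSeries (⊤ : Subgroup G) n).subtype c,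
              mem_map_of_mem _ c.2⟩ : ((_root_.commutator (Subgroup.lowerCentralSeries (⊤ : Subgroup G) n)).map
                (Subgroup.lowerCentralSeries (⊤ : Subgroup G) n).subtype))) := by
          rintro ⟨y, hy⟩
          obtain ⟨c, hc, rfl⟩ := mem_map.mp hy
          exact ⟨⟨c, hc⟩, rfl⟩
        exact Finite.of_surjective _ hs
      -- the set of commutators ⁅h, g⁆, h ∈ H, is finite
      have hSfin : Set.Finite {x : G | ∃ h ∈ Subgroup.lowerCentralSeries (⊤ : Subgroup G) n, ∃ g : G, ⁅h, g⁆ = x} := by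
        let F2 : ((Subgroup.lowerCentralSeries (⊤ : Subgroup G) n).map π) × (G ⧸ Subgroup.upperCentralSeries G (n + 1)) → G :=
          fun p => ⁅pre p.1, p.2.out⁆
        refine (Set.finite_range F2).subset ?_
        rintro x ⟨h, hh, g, rfl⟩
        refine ⟨(⟨π h, mem_map_of_mem π hh⟩, QuotientGroup.mk g), ?_⟩
        show ⁅pre _, (QuotientGroup.mk g : G ⧸ Subgroup.upperCentralSeries G (n + 1)).out⁆ = ⁅h, g⁆
        have e1 : ⁅pre ⟨π h, mem_map_of_mem π hh⟩,
            (QuotientGroup.mk g : G ⧸ Subgroup.upperCentralSeries G (n + 1)).out⁆ =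
            ⁅h, (QuotientGroup.mk g : G ⧸ Subgroup.upperCentralSeries G (n + 1)).out⁆ :=
          aux_comm_left _ (hker h _ ((hpre2 ⟨π h, mem_map_of_mem π hh⟩).symm))
        have e2 : ⁅h, (QuotientGroup.mk g : G ⧸ Subgroup.upperCentralSeries G (n + 1)).out⁆ = ⁅h, g⁆ := by
          apply aux_comm_right hh
          rw [← QuotientGroup.eq]
          exact (QuotientGroup.out_eq' _).symm
        rw [e1, e2]
      -- N = γ_{n+2} is the closure of that set of commutators
      have hNcomm : Subgroup.lowerCentralSeries (⊤ : Subgroup G) (n + 1) = ⁅Subgroup.lowerCentralSeries (⊤ : Subgroup G) n, ⊤⁆ := rfl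
      have hNclos : Subgroup.lowerCentralSeries (⊤ : Subgroup G) (n + 1) =
          closure {x : G | ∃ h ∈ Subgroup.lowerCentralSeries (⊤ : Subgroup G) n, ∃ g : G, ⁅h, g⁆ = x} := by
        rw [hNcomm, Subgroup.commutator_def]
        congr 1
        ext x
        simp
      have hNH : Subgroup.lowerCentralSeries (⊤ : Subgroup G) (n + 1) ≤ Subgroup.lowerCentralSeries (⊤ : Subgroup G) n :=
        Subgroup.lowerCentralSeries_antitone _ (Nat.le_succ n)
      -- pass to the quotient by the finite group H' = ⁅H, H⁆
      let ρ : G →* G ⧸ ⁅Subgroup.lowerCentralSeries (⊤ : Subgroup G) n, Subgroup.lowerCentralSeries (⊤ : Subgroup G) n⁆ :=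
        mk' ⁅Subgroup.lowerCentralSeries (⊤ : Subgroup G) n, Subgroup.lowerCentralSeries (⊤ : Subgroup G) n⁆
      have hkerρ : ∀ {x : G}, x ∈ ⁅Subgroup.lowerCentralSeries (⊤ : Subgroup G) n, Subgroup.lowerCentralSeries (⊤ : Subgroup G) n⁆ → ρ x = 1 := by
        intro x hx
        exact (QuotientGroup.eq_one_iff _).mpr hx
      have hkerρ' : ∀ {x : G}, ρ x = 1 → x ∈ ⁅Subgroup.lowerCentralSeries (⊤ : Subgroup G) n, Subgroup.lowerCentralSeries (⊤ : Subgroup G) n⁆ := by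
        intro x hx
        exact (QuotientGroup.eq_one_iff _).mp hx
      have hMcomm : ∀ x ∈ (Subgroup.lowerCentralSeries (⊤ : Subgroup G) (n + 1)).map ρ,
          ∀ y ∈ (Subgroup.lowerCentralSeries (⊤ : Subgroup G) (n + 1)).map ρ, x * y = y * x := by
        intro x hx y hy
        obtain ⟨a, ha, rfl⟩ := mem_map.mp hx
        obtain ⟨b, hb, rfl⟩ := mem_map.mp hy
        have h1 : ⁅ρ a, ρ b⁆ = 1 := by
          rw [← map_commutatorElement]
          exact hkerρ (commutator_mem_commutator (hNH ha) (hNH hb))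
        exact commutatorElement_eq_one_iff_mul_comm.mp h1
      -- generators of the image are torsion
      have hpowgen : ∀ (h g : G), h ∈ Subgroup.lowerCentralSeries (⊤ : Subgroup G) n →
          ∀ k : ℕ, (ρ ⁅h, g⁆) ^ k = ρ ⁅h ^ k, g⁆ := by
        intro h g hh k
        induction k with
        | zero => simp
        | succ k ihk =>
            have key : ⁅h * h ^ k, g⁆ =
                (h * ⁅h ^ k, g⁆ * h⁻¹ * ⁅h ^ k, g⁆⁻¹) * (⁅h ^ k, g⁆ * ⁅h, g⁆) := by
              simp only [commutatorElement_def]; group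
            have hx : ⁅h ^ k, g⁆ ∈ Subgroup.lowerCentralSeries (⊤ : Subgroup G) n := by
              apply hNH
              rw [hNcomm]
              exact commutator_mem_commutator (pow_mem hh k) (mem_top g)
            have hcon : h * ⁅h ^ k, g⁆ * h⁻¹ * ⁅h ^ k, g⁆⁻¹ ∈
                ⁅Subgroup.lowerCentralSeries (⊤ : Subgroup G) n, Subgroup.lowerCentralSeries (⊤ : Subgroup G) n⁆ := by
              have e : h * ⁅h ^ k, g⁆ * h⁻¹ * ⁅h ^ k, g⁆⁻¹ = ⁅h, ⁅h ^ k, g⁆⁆ := by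
                simp only [commutatorElement_def]
              rw [e]
              exact commutator_mem_commutator hh hx
            have e : ρ ⁅h ^ (k + 1), g⁆ = ρ ⁅h ^ k, g⁆ * ρ ⁅h, g⁆ := by
              rw [pow_succ', key, map_mul, hkerρ hcon, one_mul, map_mul]
            rw [pow_succ, ihk, ← e]
      have hm0 : 0 < Nat.card ((Subgroup.lowerCentralSeries (⊤ : Subgroup G) n).map π) := Nat.card_pos
      have hgen_tor : ∀ x ∈ ρ '' {x : G | ∃ h ∈ Subgroup.lowerCentralSeries (⊤ : Subgroup G) n, ∃ g : G, ⁅h, g⁆ = x},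
          IsOfFinOrder x := by
        rintro x ⟨c, ⟨h, hh, g, rfl⟩, rfl⟩
        have h1 := hpowgen h g hh (Nat.card ((Subgroup.lowerCentralSeries (⊤ : Subgroup G) n).map π))
        have h2 : ⁅h ^ (Nat.card ((Subgroup.lowerCentralSeries (⊤ : Subgroup G) n).map π)), g⁆ = 1 := by
          apply commutatorElement_eq_one_iff_mul_comm.mpr
          exact (Subgroup.mem_center_iff.mp (hpow h hh) g).symm
        exact isOfFinOrder_iff_pow_eq_one.mpr
          ⟨_, hm0, by rw [h1, h2, map_one]⟩
      have hMclos : (Subgroup.lowerCentralSeries (⊤ : Subgroup G) (n + 1)).map ρ =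
          closure (ρ '' {x : G | ∃ h ∈ Subgroup.lowerCentralSeries (⊤ : Subgroup G) n, ∃ g : G, ⁅h, g⁆ = x}) := by
        rw [hNclos, MonoidHom.map_closure]
      have htorM : ∀ x ∈ (Subgroup.lowerCentralSeries (⊤ : Subgroup G) (n + 1)).map ρ, IsOfFinOrder x := by
        intro x hx
        rw [hMclos] at hx
        refine closure_induction (p := fun g _ => IsOfFinOrder g) ?_ ?_ ?_ ?_ hx
        · exact fun y hy => hgen_tor y hy
        · exact IsOfFinOrder.one
        · intro y z hyy hzz hy hz
          have hyM : y ∈ (Subgroup.lowerCentralSeries (⊤ : Subgroup G) (n + 1)).map ρ := by rw [hMclos]; exact hyy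
          have hzM : z ∈ (Subgroup.lowerCentralSeries (⊤ : Subgroup G) (n + 1)).map ρ := by rw [hMclos]; exact hzz
          exact Commute.isOfFinOrder_mul (hMcomm y hyM z hzM) hy hz
        · exact fun y _ hy => hy.inv
      haveI hMcomm' : IsMulCommutative ((Subgroup.lowerCentralSeries (⊤ : Subgroup G) (n + 1)).map ρ) :=
        ⟨⟨fun x y => Subtype.ext (hMcomm x.1 x.2 y.1 y.2)⟩⟩
      haveI hMfg : Group.FG ((Subgroup.lowerCentralSeries (⊤ : Subgroup G) (n + 1)).map ρ) := by
        rw [Group.fg_iff_subgroup_fg]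
        exact (Subgroup.fg_iff _).mpr ⟨_, hMclos.symm, hSfin.image ρ⟩
      haveI hMfin : Finite ((Subgroup.lowerCentralSeries (⊤ : Subgroup G) (n + 1)).map ρ) := by
        open scoped IsMulCommutative in
        apply CommGroup.finite_of_fg_torsion
        intro x
        obtain ⟨k, hk, hk1⟩ := isOfFinOrder_iff_pow_eq_one.mp (htorM x.1 x.2)
        refine isOfFinOrder_iff_pow_eq_one.mpr ⟨k, hk, ?_⟩
        apply Subtype.ext
        rw [SubmonoidClass.coe_pow]
        exact hk1
      -- N is finite, being an extension of finite M by finite ⁅H,H⁆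
      have hsec : ∀ y : (Subgroup.lowerCentralSeries (⊤ : Subgroup G) (n + 1)).map ρ,
          ∃ g, g ∈ Subgroup.lowerCentralSeries (⊤ : Subgroup G) (n + 1) ∧ ρ g = ↑y := fun y => mem_map.mp y.2
      let sec : (Subgroup.lowerCentralSeries (⊤ : Subgroup G) (n + 1)).map ρ → G := fun y => (hsec y).choose
      have hsec2 : ∀ y, ρ (sec y) = ↑y := fun y => (hsec y).choose_spec.2
      let Φ : Subgroup.lowerCentralSeries (⊤ : Subgroup G) (n + 1) →
          ↥((Subgroup.lowerCentralSeries (⊤ : Subgroup G) (n + 1)).map ρ) ×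
            ↥(⁅Subgroup.lowerCentralSeries (⊤ : Subgroup G) n, Subgroup.lowerCentralSeries (⊤ : Subgroup G) n⁆ : Subgroup G) := fun x =>
        ⟨⟨ρ x.1, mem_map_of_mem ρ x.2⟩,
          ⟨(sec ⟨ρ x.1, mem_map_of_mem ρ x.2⟩)⁻¹ * x.1, by
            apply hkerρ'
            rw [map_mul, map_inv, hsec2]
            simp⟩⟩
      have hΦ : Function.Injective Φ := by
        intro x y hxy
        have h1 : (Φ x).1 = (Φ y).1 := congrArg Prod.fst hxy
        have h2 : (Φ x).2 = (Φ y).2 := congrArg Prod.snd hxy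
        have e : (sec (Φ x).1)⁻¹ * x.1 = (sec (Φ y).1)⁻¹ * y.1 := congrArg Subtype.val h2
        rw [h1] at e
        exact Subtype.ext (mul_left_cancel e)
      exact Finite.of_injective Φ hΦ

/-- Hall-type converse: if `G` is finitely generated and `γ_{n+1}(G)` is finite,
then `G ⧸ Z_n(G)` is finite. -/
private theorem aux_hall : ∀ (n : ℕ) (G : Type u) [Group G], Group.FG G →
    Finite (Subgroup.lowerCentralSeries (⊤ : Subgroup G) n) → Finite (G ⧸ Subgroup.upperCentralSeries G n) := by
  intro n
  induction n with
  | zero =>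
      intro G _ _ hfin
      haveI : Finite (⊤ : Subgroup G) := by
        rw [← Subgroup.lowerCentralSeries_zero (⊤ : Subgroup G)]; exact hfin
      haveI : Finite G := Finite.of_equiv _ (Subgroup.topEquiv (G := G)).toEquiv
      exact Finite.of_surjective (⇑(mk' (Subgroup.upperCentralSeries G 0))) (mk'_surjective _)
  | succ n ih =>
      intro G _ hfg hfin
      obtain ⟨Tset, hclos, hTfin⟩ := Group.fg_iff.mp hfg
      let π : G →* G ⧸ center G := mk' (center G)
      have hpre : ∀ x : (Subgroup.lowerCentralSeries (⊤ : Subgroup G) n).map π,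
          ∃ g, g ∈ Subgroup.lowerCentralSeries (⊤ : Subgroup G) n ∧ π g = ↑x := fun x => mem_map.mp x.2
      let pre : (Subgroup.lowerCentralSeries (⊤ : Subgroup G) n).map π → G := fun x => (hpre x).choose
      have hpre1 : ∀ x, pre x ∈ Subgroup.lowerCentralSeries (⊤ : Subgroup G) n := fun x => (hpre x).choose_spec.1
      have hpre2 : ∀ x, π (pre x) = ↑x := fun x => (hpre x).choose_spec.2
      haveI : Finite Tset := hTfin.to_subtype
      haveI hfin' : Finite (Subgroup.lowerCentralSeries (⊤ : Subgroup G) (n + 1)) := hfin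
      let F : (Subgroup.lowerCentralSeries (⊤ : Subgroup G) n).map π → (Tset → Subgroup.lowerCentralSeries (⊤ : Subgroup G) (n + 1)) :=
        fun x t => ⟨⁅pre x, (t : G)⁆, by
          show ⁅pre x, (t : G)⁆ ∈ ⁅Subgroup.lowerCentralSeries (⊤ : Subgroup G) n, ⊤⁆
          exact commutator_mem_commutator (hpre1 x) (mem_top _)⟩
      have hF : Function.Injective F := by
        intro x y hxy
        have key : ∀ t : G, t ∈ Tset → Commute ((pre y)⁻¹ * pre x) t := by
          intro t ht
          have e : ⁅pre x, t⁆ = ⁅pre y, t⁆ :=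
            congrArg Subtype.val (congrFun hxy ⟨t, ht⟩)
          have h3 : pre x * t * (pre x)⁻¹ = pre y * t * (pre y)⁻¹ := by
            simp only [commutatorElement_def] at e
            exact mul_right_cancel e
          show ((pre y)⁻¹ * pre x) * t = t * ((pre y)⁻¹ * pre x)
          calc ((pre y)⁻¹ * pre x) * t
              = (pre y)⁻¹ * (pre x * t * (pre x)⁻¹) * pre x := by group
            _ = (pre y)⁻¹ * (pre y * t * (pre y)⁻¹) * pre x := by rw [h3]
            _ = t * ((pre y)⁻¹ * pre x) := by group
        have hz : (pre y)⁻¹ * pre x ∈ center G := by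
          rw [Subgroup.mem_center_iff]
          intro g
          have hg : g ∈ closure Tset := by rw [hclos]; exact mem_top g
          have : Commute ((pre y)⁻¹ * pre x) g := by
            refine closure_induction (p := fun g _ => Commute ((pre y)⁻¹ * pre x) g)
              ?_ ?_ ?_ ?_ hg
            · exact fun t ht => key t ht
            · exact Commute.one_right _
            · exact fun a b _ _ ha hb => ha.mul_right hb
            · exact fun a _ ha => ha.inv_right
          exact this.symm
        have e4 : π (pre x) = π (pre y) := by
          have h5 : π ((pre y)⁻¹ * pre x) = 1 := (QuotientGroup.eq_one_iff _).mpr hz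
          rw [map_mul, map_inv] at h5
          exact (inv_mul_eq_one.mp h5).symm
        apply Subtype.ext
        rw [← hpre2 x, ← hpre2 y, e4]
      haveI : Finite ((Subgroup.lowerCentralSeries (⊤ : Subgroup G) n).map π) := Finite.of_injective F hF
      haveI : Finite (Subgroup.lowerCentralSeries (⊤ : Subgroup (G ⧸ center G)) n) := by
        rw [← aux_map_lcs π (mk'_surjective _) n]
        infer_instance
      haveI : Group.FG G := hfg
      haveI hfgbar : Group.FG (G ⧸ center G) :=
        Group.fg_of_surjective (mk'_surjective (center G))
      have hq : Finite ((G ⧸ center G) ⧸ Subgroup.upperCentralSeries (G ⧸ center G) n) :=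
        ih (G ⧸ center G) hfgbar inferInstance
      exact Finite.of_equiv _ (auxQuotEquiv G n).symm.toEquiv

end Aux

/-- Theorem 1 (Faramarzi Salles): For a finitely generated group `G` and `i ≥ 1`,
`γ_{i+1}(G)` (here `Subgroup.lowerCentralSeries (⊤ : Subgroup G) i`, since `γ_1(G) = Subgroup.lowerCentralSeries (⊤ : Subgroup G) 0 = G`)
is finite iff `G / Z_i(G)` is finite, where `Z_i(G) = Subgroup.upperCentralSeries G i`. -/
theorem finite_lowerCentralSeries_iff_finite_quotient_upperCentralSeries
    (G : Type*) [Group G] (hfg : Group.FG G) (i : ℕ) (hi : 1 ≤ i) :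
    Finite (Subgroup.lowerCentralSeries (⊤ : Subgroup G) i) ↔ Finite (G ⧸ Subgroup.upperCentralSeries G i) :=
  ⟨fun h => aux_hall i G hfg h, fun h => aux_baer i G h⟩
end

section
/- Let G be a finitely generated group and let i ≥ 1. If the (i+1)-st term γ_{i+1}(G) of the lower central series of G is finite, then the i-th term Z_i(G) of the upper central series of G has finite index in G. -/
open Subgroup QuotientGroup
open scoped commutatorElement

private lemma lcs_succ_eq {G : Type*} [Group G] (n : ℕ) :
    (⊤ : Subgroup G).lowerCentralSeries (n + 1) = ⁅(⊤ : Subgroup G).lowerCentralSeries n, (⊤ : Subgroup G)⁆ := rfl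

/-- If `G` is generated by a finite set and the commutators `⁅n, g⁆` with `n ∈ N`
all lie in a finite subgroup `F`, then the image of `N` in `G ⧸ center G` is finite. -/
private lemma key_finite_image {G : Type*} [Group G] (hfg : Group.FG G)
    (N F : Subgroup G) (hF : Finite F)
    (hc : ∀ n ∈ N, ∀ g : G, ⁅n, g⁆ ∈ F) :
    Finite (N.map (QuotientGroup.mk' (center G))) := by
  obtain ⟨S, hS⟩ := hfg.1
  set π := QuotientGroup.mk' (center G) with hπ
  set f : N →* G ⧸ center G := π.comp N.subtype with hf
  have hrange : f.range = N.map π := by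
    rw [hf, MonoidHom.range_comp, Subgroup.range_subtype]
  -- membership in the kernel means being central
  have hker_iff : ∀ n : N, n ∈ f.ker ↔ (n : G) ∈ center G := by
    intro n
    rw [MonoidHom.mem_ker, hf, MonoidHom.comp_apply, ← MonoidHom.mem_ker,
      QuotientGroup.ker_mk']
    rfl
  have hker : Finite (N ⧸ f.ker) := by
    let Φ : N → (S → F) := fun n s => ⟨⁅(n : G), s.1⁆, hc n n.2 s.1⟩
    have hΦ : ∀ a b : N, (QuotientGroup.leftRel f.ker).r a b → Φ a = Φ b := by
      intro a b hab
      rw [QuotientGroup.leftRel_apply] at hab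
      have hab' : (a : G)⁻¹ * (b : G) ∈ center G := (hker_iff _).mp hab
      funext s
      apply Subtype.ext
      show ⁅(a : G), s.1⁆ = ⁅(b : G), s.1⁆
      set x := (a : G) with hx
      set y := (b : G) with hy
      set g := s.1 with hg
      set c := x⁻¹ * y with hcdef
      have hcc : ∀ h : G, c * h = h * c := fun h =>
        (Subgroup.mem_center_iff.mp hab' h).symm
      have h1 : y = x * c := by rw [hcdef]; group
      have h2 : c * g * c⁻¹ = g := by rw [hcc g]; group
      rw [commutatorElement_def, commutatorElement_def]
      calc x * g * x⁻¹ * g⁻¹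
          = x * (c * g * c⁻¹) * x⁻¹ * g⁻¹ := by rw [h2]
        _ = (x * c) * g * (x * c)⁻¹ * g⁻¹ := by group
        _ = y * g * y⁻¹ * g⁻¹ := by rw [h1]
    have hinj : Function.Injective (Quotient.lift Φ hΦ : N ⧸ f.ker → (S → F)) := by
      intro xq yq
      refine Quotient.inductionOn₂ xq yq ?_
      intro a b h
      have h' : ∀ s : S, ⁅(a : G), s.1⁆ = ⁅(b : G), s.1⁆ := fun s =>
        Subtype.ext_iff.mp (congrFun h s)
      refine Quotient.sound' (QuotientGroup.leftRel_apply.mpr ((hker_iff _).mpr ?_))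
      set x := (a : G)
      set y := (b : G)
      show x⁻¹ * y ∈ center G
      rw [Subgroup.mem_center_iff]
      have hle : Subgroup.closure (S : Set G) ≤ Subgroup.centralizer {x⁻¹ * y} := by
        rw [Subgroup.closure_le]
        intro g hg
        simp only [SetLike.mem_coe]
        rw [Subgroup.mem_centralizer_singleton_iff]
        have hcomm := h' ⟨g, hg⟩
        simp only [commutatorElement_def] at hcomm
        have h2 : x * g * x⁻¹ = y * g * y⁻¹ := mul_right_cancel hcomm
        calc g * (x⁻¹ * y) = x⁻¹ * (x * g * x⁻¹) * y := by group
          _ = x⁻¹ * (y * g * y⁻¹) * y := by rw [h2]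
          _ = (x⁻¹ * y) * g := by group
      intro g
      have hg : g ∈ Subgroup.centralizer {x⁻¹ * y} := by
        rw [hS] at hle; exact hle (Subgroup.mem_top g)
      exact Subgroup.mem_centralizer_singleton_iff.mp hg
    exact Finite.of_injective _ hinj
  have hfin' : Finite f.range :=
    Finite.of_equiv (N ⧸ f.ker) (QuotientGroup.quotientKerEquivRange f).toEquiv
  rwa [hrange] at hfin'

private lemma main_aux : ∀ (i : ℕ), 1 ≤ i → ∀ (G : Type u) [Group G], Group.FG G →
    Finite ((⊤ : Subgroup G).lowerCentralSeries i) → (Subgroup.upperCentralSeries G i).FiniteIndex := by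
  intro i
  induction i with
  | zero => omega
  | succ i ih =>
    intro _ G _ hfg hfin
    rcases Nat.eq_zero_or_pos i with hi0 | hi1
    · -- base case: i = 0, so γ₁ = commutator subgroup finite
      subst hi0
      have hkey : Finite ((⊤ : Subgroup G).map (QuotientGroup.mk' (center G))) := by
        apply key_finite_image hfg ⊤ ((⊤ : Subgroup G).lowerCentralSeries 1) hfin
        intro n _ g
        rw [lcs_succ_eq, Subgroup.lowerCentralSeries_zero]
        exact Subgroup.commutator_mem_commutator (Subgroup.mem_top n) (Subgroup.mem_top g)
      rw [Subgroup.map_top_of_surjective _ (QuotientGroup.mk'_surjective _)] at hkey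
      have hquot : Finite (G ⧸ center G) :=
        Finite.of_equiv _ (Subgroup.topEquiv (G := G ⧸ center G)).toEquiv
      rw [Subgroup.upperCentralSeries_one]
      exact @Subgroup.finiteIndex_of_finite_quotient G _ (center G) hquot
    · -- inductive step: i ≥ 1
      set Z := center G
      set π := QuotientGroup.mk' Z
      set Q := G ⧸ Z
      have hfgQ : Group.FG Q := Group.fg_of_surjective (QuotientGroup.mk'_surjective Z)
      -- γ_i(Q) = image of γ_i(G)
      have hmap : ∀ n : ℕ, (⊤ : Subgroup Q).lowerCentralSeries n = ((⊤ : Subgroup G).lowerCentralSeries n).map π := by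
        intro n
        induction n with
        | zero =>
          simp [Subgroup.map_top_of_surjective π (QuotientGroup.mk'_surjective Z)]
        | succ n ihn =>
          rw [lcs_succ_eq, lcs_succ_eq, ihn, Subgroup.map_commutator,
            Subgroup.map_top_of_surjective π (QuotientGroup.mk'_surjective Z)]
      have hfinQ : Finite ((⊤ : Subgroup Q).lowerCentralSeries i) := by
        rw [hmap i]
        apply key_finite_image hfg ((⊤ : Subgroup G).lowerCentralSeries i) ((⊤ : Subgroup G).lowerCentralSeries (i + 1)) hfin
        intro n hn g
        rw [lcs_succ_eq]
        exact Subgroup.commutator_mem_commutator hn (Subgroup.mem_top g)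
      have hQ : (Subgroup.upperCentralSeries Q i).FiniteIndex := ih hi1 Q hfgQ hfinQ
      have hcomap := Subgroup.comap_upperCentralSeries_quotient_center (G := G) i
      constructor
      rw [← hcomap, Subgroup.index_comap_of_surjective _ (QuotientGroup.mk'_surjective Z)]
      exact hQ.index_ne_zero

/-- For a finitely generated group `G` and `i ≥ 1`, if `γ_{i+1}(G)` (here
`lowerCentralSeries G i`, since `γ_1(G) = lowerCentralSeries G 0 = G`) is finite,
then `Z_i(G) = upperCentralSeries G i` has finite index in `G`. -/
theorem finiteIndex_upperCentralSeries_of_finite_lowerCentralSeries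
    (G : Type*) [Group G] (hfg : Group.FG G) (i : ℕ) (hi : 1 ≤ i)
    (hfin : Finite ((⊤ : Subgroup G).lowerCentralSeries i)) :
    (Subgroup.upperCentralSeries G i).FiniteIndex :=
  main_aux i hi G hfg hfin
end

section
/- Let G be a group such that the central quotient G/Z(G) is finitely generated, and let i ≥ 1. If the (i+1)-st term γ_{i+1}(G) of the lower central series of G is finite, then the i-th term Z_i(G) of the upper central series of G has finite index in G. -/
open Subgroup
open scoped commutatorElement

section Aux

variable {G : Type*} [Group G]

/-- If `⁅L, ⊤⁆` is finite, then the centralizer of any element has finite index in `L`. -/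
lemma aux_finiteIndex_centralizer_subgroupOf (L : Subgroup G) (t : G)
    (hfin : Finite (⁅L, (⊤ : Subgroup G)⁆ : Subgroup G)) :
    ((centralizer (zpowers t)).subgroupOf L).FiniteIndex := by
  set H := (centralizer (zpowers t)).subgroupOf L with hH
  have key : ∀ a b : L, (a : G)⁻¹ * b ∈ centralizer (zpowers t) ↔ ⁅(a : G), t⁆ = ⁅(b : G), t⁆ := by
    intro a b
    constructor
    · intro h
      have hc : ((a : G)⁻¹ * b) * t = t * ((a : G)⁻¹ * b) :=
        (h t (mem_zpowers t)).symm
      have : (b : G) * t * (b : G)⁻¹ = (a : G) * t * (a : G)⁻¹ := by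
        have hb : (b : G) = a * ((a : G)⁻¹ * b) := by group
        rw [hb]
        have : ((a : G)⁻¹ * b) * t * ((a : G)⁻¹ * b)⁻¹ = t := by
          rw [hc]; group
        calc (a : G) * ((a : G)⁻¹ * (b : G)) * t * ((a : G) * ((a : G)⁻¹ * (b : G)))⁻¹
            = (a : G) * (((a : G)⁻¹ * (b : G)) * t * ((a : G)⁻¹ * (b : G))⁻¹) * (a : G)⁻¹ := by
              group
          _ = (a : G) * t * (a : G)⁻¹ := by rw [this]
      simp only [commutatorElement_def]
      rw [this]
    · intro h
      intro g hg
      obtain ⟨n, rfl⟩ := hg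
      have hc : Commute ((a : G)⁻¹ * b) t := by
        have := h
        simp only [commutatorElement_def] at this
        have h2 : (a : G) * t * (a : G)⁻¹ = (b : G) * t * (b : G)⁻¹ := by
          have := congrArg (· * t) this
          simpa [mul_assoc] using this
        unfold Commute SemiconjBy
        calc (a : G)⁻¹ * b * t = (a : G)⁻¹ * ((b : G) * t * (b : G)⁻¹) * b := by group
          _ = (a : G)⁻¹ * ((a : G) * t * (a : G)⁻¹) * b := by rw [h2]
          _ = t * ((a : G)⁻¹ * b) := by group
      exact ((hc.zpow_right n).symm).eq
  -- the map to the finite commutator subgroup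
  have : Finite (L ⧸ H) := by
    let f : L ⧸ H → (⁅L, (⊤ : Subgroup G)⁆ : Subgroup G) :=
      fun q => Quotient.liftOn' q
        (fun x => ⟨⁅(x : G), t⁆, commutator_mem_commutator x.2 (mem_top t)⟩)
        (by
          intro a b hab
          rw [QuotientGroup.leftRel_apply] at hab
          exact Subtype.ext ((key a b).mp hab))
    have hinj : Function.Injective f := by
      intro q₁ q₂
      induction q₁ using Quotient.inductionOn'
      induction q₂ using Quotient.inductionOn'
      intro h
      apply Quotient.sound'
      rw [QuotientGroup.leftRel_apply]
      exact (key _ _).mpr (congrArg Subtype.val h)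
    exact Finite.of_injective f hinj
  exact Subgroup.finiteIndex_of_finite_quotient (H := H)

end Aux

section Aux2
variable {G : Type*} [Group G]

/-- If `T` together with the center generates `G`, the center is the intersection of
centralizers of elements of `T`. -/
lemma aux_center_eq_iInf (T : Set G) (hT : Subgroup.closure T ⊔ center G = ⊤) :
    center G = ⨅ t ∈ T, centralizer (zpowers t) := by
  have hS : Subgroup.closure (T ∪ (center G : Set G)) = ⊤ := by
    rw [Subgroup.closure_union, Subgroup.closure_eq, hT]
  apply le_antisymm
  · simp only [le_iInf_iff]
    intro t ht
    intro x hx g hg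
    exact (hx.comm g).symm
  · rw [Subgroup.center_eq_infi' hS]
    simp only [le_iInf_iff]
    rintro ⟨g, hg⟩
    rcases hg with hg | hg
    · exact (iInf₂_le g hg).trans (Subgroup.centralizer_le (by simp))
    · intro x hx h hh
      rw [Set.mem_singleton_iff.mp hh]
      exact ((Subgroup.mem_center_iff.mp hg) x).symm

/-- Key lemma: if `G/Z(G)` is f.g. and `⁅L, ⊤⁆` is finite, then `Z(G) ∩ L` has finite
index in `L`. -/
lemma aux_finiteIndex_center_subgroupOf (hfg : Group.FG (G ⧸ center G)) (L : Subgroup G)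
    (hfin : Finite (⁅L, (⊤ : Subgroup G)⁆ : Subgroup G)) :
    ((center G).subgroupOf L).FiniteIndex := by
  obtain ⟨n, T', hcard, hT'⟩ := Group.fg_iff'.mp hfg
  classical
  let T : Finset G := T'.image Quotient.out
  have hmap : (QuotientGroup.mk' (center G)) '' (T : Set G) = (T' : Set (G ⧸ center G)) := by
    ext q
    simp only [Set.mem_image, Finset.coe_image, T]
    constructor
    · rintro ⟨g, ⟨q', hq', rfl⟩, rfl⟩
      simpa [QuotientGroup.mk'_apply, Quotient.out_eq'] using hq'
    · intro hq
      exact ⟨q.out, ⟨q, hq, rfl⟩, by simp [QuotientGroup.mk'_apply, Quotient.out_eq']⟩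
  have hT : Subgroup.closure (T : Set G) ⊔ center G = ⊤ := by
    have h0 : Subgroup.closure (T : Set G) ⊔ center G =
        Subgroup.comap (QuotientGroup.mk' (center G))
          (Subgroup.map (QuotientGroup.mk' (center G)) (Subgroup.closure (T : Set G))) := by
      rw [Subgroup.comap_map_eq, QuotientGroup.ker_mk']
    rw [h0, MonoidHom.map_closure, hmap, hT', Subgroup.comap_top]
  rw [aux_center_eq_iInf (T : Set G) hT]
  have : (⨅ t ∈ (T : Set G), centralizer (zpowers t)).subgroupOf L =
      ⨅ t ∈ T, (centralizer (zpowers t)).subgroupOf L := by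
    simp only [subgroupOf, Subgroup.comap_iInf, Finset.mem_coe]
  rw [this]
  exact Subgroup.finiteIndex_iInf' _ fun t _ => aux_finiteIndex_centralizer_subgroupOf L t hfin

end Aux2

section Aux3
variable {G : Type*} [Group G]

/-- If `G/Z(G)` is f.g. and `⁅L, ⊤⁆` is finite, the image of `L` in `G/Z(G)` is finite. -/
lemma aux_finite_map_of_commutator_finite (hfg : Group.FG (G ⧸ center G)) (L : Subgroup G)
    (hfin : Finite (⁅L, (⊤ : Subgroup G)⁆ : Subgroup G)) :
    Finite (Subgroup.map (QuotientGroup.mk' (center G)) L) := by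
  haveI := aux_finiteIndex_center_subgroupOf hfg L hfin
  let f := (QuotientGroup.mk' (center G)).comp L.subtype
  have hker : f.ker = (center G).subgroupOf L := by
    rw [← MonoidHom.comap_ker, QuotientGroup.ker_mk']
    rfl
  have hrange : f.range = Subgroup.map (QuotientGroup.mk' (center G)) L := by
    rw [MonoidHom.range_comp, L.range_subtype]
  have : Finite (L ⧸ f.ker) := by
    rw [hker]; infer_instance
  have : Finite f.range := Finite.of_equiv (L ⧸ f.ker) (QuotientGroup.quotientKerEquivRange f)
  rw [← hrange]
  exact this

end Aux3

/-- Lower central series of a quotient is contained in the image of the lower central series. -/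
lemma aux_lcs_quotient_le {G : Type*} [Group G] {Q : Type*} [Group Q] (f : G →* Q)
    (hf : Function.Surjective f) (n : ℕ) :
    (⊤ : Subgroup Q).lowerCentralSeries n ≤ Subgroup.map f ((⊤ : Subgroup G).lowerCentralSeries n) := by
  induction n with
  | zero => simp [Subgroup.map_top_of_surjective f hf]
  | succ n ih =>
      show ⁅(⊤ : Subgroup Q).lowerCentralSeries n, (⊤ : Subgroup Q)⁆ ≤
        Subgroup.map f ⁅(⊤ : Subgroup G).lowerCentralSeries n, ⊤⁆
      calc ⁅(⊤ : Subgroup Q).lowerCentralSeries n, (⊤ : Subgroup Q)⁆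
          ≤ ⁅Subgroup.map f ((⊤ : Subgroup G).lowerCentralSeries n), Subgroup.map f ⊤⁆ :=
            Subgroup.commutator_mono ih (by rw [Subgroup.map_top_of_surjective f hf])
        _ = Subgroup.map f ⁅(⊤ : Subgroup G).lowerCentralSeries n, ⊤⁆ := (Subgroup.map_commutator _ _ _).symm

universe u

theorem aux_main : ∀ (i : ℕ), 1 ≤ i → ∀ (G : Type u) (_ : Group G),
    Group.FG (G ⧸ center G) → Finite ((⊤ : Subgroup G).lowerCentralSeries i) →
    (Subgroup.upperCentralSeries G i).FiniteIndex := by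
  intro i hi
  induction i, hi using Nat.le_induction with
  | base =>
      intro G _ hfg hfin
      rw [Subgroup.upperCentralSeries_one]
      have h1 : (⊤ : Subgroup G).lowerCentralSeries 1 = ⁅(⊤ : Subgroup G), (⊤ : Subgroup G)⁆ := rfl
      rw [h1] at hfin
      haveI := aux_finiteIndex_center_subgroupOf hfg ⊤ hfin
      constructor
      have : ((center G).subgroupOf (⊤ : Subgroup G)).index = (center G).index := by
        rw [← Subgroup.relIndex, Subgroup.relIndex_top_right]
      rw [← this]
      exact Subgroup.FiniteIndex.index_ne_zero
  | succ n hn ih =>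
      intro G _ hfg hfin
      set π := QuotientGroup.mk' (center G)
      have hπ : Function.Surjective π := QuotientGroup.mk'_surjective _
      -- the image of lcs G n in the quotient is finite
      have hfin' : Finite (Subgroup.map π ((⊤ : Subgroup G).lowerCentralSeries n)) := by
        apply aux_finite_map_of_commutator_finite hfg
        exact hfin
      have hle := aux_lcs_quotient_le π hπ n
      have hfinQ : Finite ((⊤ : Subgroup (G ⧸ center G)).lowerCentralSeries n) :=
        Finite.of_injective (Subgroup.inclusion hle) (Subgroup.inclusion_injective hle)
      haveI : Group.FG (G ⧸ center G) := hfg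
      have hfgQ : Group.FG ((G ⧸ center G) ⧸ center (G ⧸ center G)) := inferInstance
      have hQ := ih (G ⧸ center G) inferInstance hfgQ hfinQ
      constructor
      rw [← Subgroup.comap_upperCentralSeries_quotient_center n,
        Subgroup.index_comap_of_surjective _ hπ]
      exact hQ.index_ne_zero

/-- For a group `G` with `G / Z(G)` finitely generated and `i ≥ 1`, if `γ_{i+1}(G)`
(here `lowerCentralSeries G i`, since `γ_1(G) = lowerCentralSeries G 0 = G`) is finite,
then `Z_i(G) = upperCentralSeries G i` has finite index in `G`. -/
theorem finiteIndex_upperCentralSeries_of_finite_lowerCentralSeries_of_fg_centralQuotient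
    (G : Type*) [Group G] (hfg : Group.FG (G ⧸ Subgroup.center G)) (i : ℕ) (hi : 1 ≤ i)
    (hfin : Finite (Subgroup.lowerCentralSeries (⊤ : Subgroup G) i)) :
    (Subgroup.upperCentralSeries G i).FiniteIndex := by
  exact aux_main i hi G inferInstance hfg hfin
end

section
/- Let G be a finitely generated group, let i ≥ 1, and suppose that the (i+1)-st term γ_{i+1}(G) of the lower central series of G is finite. Then the quotient γ_i(G)/(γ_i(G) ∩ Z(G)) is finite; that is, γ_i(G) ∩ Z(G) has finite index in γ_i(G). -/
open scoped commutatorElement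

private lemma aux_comm_central {G : Type*} [Group G] (h z g : G)
    (hz : ∀ a : G, z * a = a * z) : ⁅h * z, g⁆ = ⁅h, g⁆ := by
  simp only [commutatorElement_def, mul_inv_rev]
  have key : z * g * z⁻¹ = g := by rw [hz g]; group
  calc h * z * g * (z⁻¹ * h⁻¹) * g⁻¹ = h * (z * g * z⁻¹) * h⁻¹ * g⁻¹ := by group
    _ = h * g * h⁻¹ * g⁻¹ := by rw [key]

private lemma aux_comm_eq {G : Type*} [Group G] (h1 h2 g : G)
    (h : ⁅h1, g⁆ = ⁅h2, g⁆) : g * (h1⁻¹ * h2) = (h1⁻¹ * h2) * g := by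
  simp only [commutatorElement_def] at h
  have h' : h1 * g * h1⁻¹ = h2 * g * h2⁻¹ := mul_right_cancel h
  calc g * (h1⁻¹ * h2) = h1⁻¹ * (h1 * g * h1⁻¹) * h2 := by group
    _ = h1⁻¹ * (h2 * g * h2⁻¹) * h2 := by rw [h']
    _ = (h1⁻¹ * h2) * g := by group

/-- For a finitely generated group `G` and `i ≥ 1`, if `γ_{i+1}(G)` (here
`(⊤ : Subgroup G).lowerCentralSeries i`) is finite, then `γ_i(G) ∩ Z(G)` has finite index in
`γ_i(G)` (here `(⊤ : Subgroup G).lowerCentralSeries (i - 1)`). -/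
theorem finiteIndex_inf_center_subgroupOf_lowerCentralSeries
    (G : Type*) [Group G] (hfg : Group.FG G) (i : ℕ) (hi : 1 ≤ i)
    (hfin : Finite ((⊤ : Subgroup G).lowerCentralSeries i)) :
    (((⊤ : Subgroup G).lowerCentralSeries (i - 1) ⊓ Subgroup.center G).subgroupOf
      ((⊤ : Subgroup G).lowerCentralSeries (i - 1))).FiniteIndex := by
  obtain ⟨S, hS⟩ := hfg
  set H := (⊤ : Subgroup G).lowerCentralSeries (i - 1) with hH
  set K := ((H ⊓ Subgroup.center G).subgroupOf H) with hK
  have hcomm : ∀ (h : H) (g : G), ⁅(h : G), g⁆ ∈ (⊤ : Subgroup G).lowerCentralSeries i := by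
    intro h g
    have hstep : (⊤ : Subgroup G).lowerCentralSeries i = ⁅H, (⊤ : Subgroup G)⁆ := by
      conv_lhs => rw [← Nat.succ_pred_eq_of_pos hi]
      rfl
    rw [hstep]
    exact Subgroup.commutator_mem_commutator h.2 (Subgroup.mem_top g)
  let f : H → (S → (⊤ : Subgroup G).lowerCentralSeries i) := fun h g => ⟨⁅(h : G), (g : G)⁆, hcomm h g⟩
  -- if f h1 = f h2 then h1⁻¹ * h2 is central
  have hf : ∀ h1 h2 : H, f h1 = f h2 → (h1 : G)⁻¹ * (h2 : G) ∈ Subgroup.center G := by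
    intro h1 h2 he
    rw [Subgroup.mem_center_iff]
    intro g
    have hg : g ∈ Subgroup.closure (S : Set G) := hS ▸ Subgroup.mem_top g
    refine Subgroup.closure_induction (fun x hx => ?_)
      (Commute.one_left _) (fun a b _ _ ha hb => Commute.mul_left ha hb)
      (fun a _ ha => Commute.inv_left ha) hg
    have hx' := congrFun he ⟨x, hx⟩
    have hx'' : ⁅(h1 : G), x⁆ = ⁅(h2 : G), x⁆ := congrArg Subtype.val hx'
    exact aux_comm_eq (h1 : G) (h2 : G) x hx''
  -- f is constant on K-cosets
  have hwd : ∀ h1 h2 : H, (QuotientGroup.leftRel K) h1 h2 → f h1 = f h2 := by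
    intro h1 h2 hrel
    rw [QuotientGroup.leftRel_apply] at hrel
    have hz : ((h1⁻¹ * h2 : H) : G) ∈ Subgroup.center G :=
      (Subgroup.mem_subgroupOf.mp hrel).2
    rw [Subgroup.mem_center_iff] at hz
    funext g
    apply Subtype.ext
    show ⁅(h1 : G), (g : G)⁆ = ⁅(h2 : G), (g : G)⁆
    have hh2 : (h2 : G) = (h1 : G) * ((h1⁻¹ * h2 : H) : G) := by
      push_cast; group
    rw [hh2, aux_comm_central (h1 : G) _ (g : G) (fun a => (hz a).symm)]
  let F : H ⧸ K → (S → (⊤ : Subgroup G).lowerCentralSeries i) :=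
    Quotient.lift f (by intro a b h; exact hwd a b h)
  have hFinj : Function.Injective F := by
    intro q1 q2
    induction q1 using Quotient.ind with
    | _ h1 =>
      induction q2 using Quotient.ind with
      | _ h2 =>
        intro he
        have he' : f h1 = f h2 := he
        apply Quotient.sound
        refine QuotientGroup.leftRel_apply.mpr (Subgroup.mem_subgroupOf.mpr ⟨(h1⁻¹ * h2).2, ?_⟩)
        exact hf h1 h2 he'
  have : Finite (H ⧸ K) := Finite.of_injective F hFinj
  exact Subgroup.finiteIndex_of_finite_quotient (H := K)
end

section
/- Let G be a group such that the central quotient G/Z(G) is finitely generated, let i ≥ 1, and suppose that the (i+1)-st term γ_{i+1}(G) of the lower central series of G is finite. Then γ_i(G) ∩ Z(G) has finite index in γ_i(G). -/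
open Subgroup
open scoped commutatorElement

private lemma aux_mem_center {G : Type*} [Group G] (k : G) (S : Set (G ⧸ Subgroup.center G))
    (hS : Subgroup.closure S = ⊤)
    (hc : ∀ s ∈ S, (Quotient.out s) * k = k * (Quotient.out s)) : k ∈ Subgroup.center G := by
  set T := Subgroup.centralizer ({k} : Set G) with hT
  have hZ : Subgroup.center G ≤ T := Subgroup.center_le_centralizer _
  have hmap : Subgroup.map (QuotientGroup.mk' (Subgroup.center G)) T = ⊤ := by
    rw [← top_le_iff, ← hS, Subgroup.closure_le]
    intro s hs
    refine ⟨Quotient.out s, ?_, QuotientGroup.out_eq' s⟩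
    simp only [SetLike.mem_coe]
    rw [Subgroup.mem_centralizer_iff]
    intro m hm
    rw [Set.mem_singleton_iff] at hm
    subst hm
    exact (hc s hs).symm
  have hTtop : T = ⊤ := by
    have h2 := Subgroup.comap_map_eq (QuotientGroup.mk' (Subgroup.center G)) T
    rw [hmap, QuotientGroup.ker_mk', Subgroup.comap_top] at h2
    rw [h2]
    exact (sup_eq_left.mpr hZ).symm
  rw [Subgroup.mem_center_iff]
  intro g
  have hg : g ∈ T := hTtop ▸ Subgroup.mem_top g
  rw [Subgroup.mem_centralizer_iff] at hg
  exact (hg k rfl).symm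

/-- For a group `G` with `G / Z(G)` finitely generated and `i ≥ 1`, if `γ_{i+1}(G)`
(here `lowerCentralSeries G i`) is finite, then `γ_i(G) ∩ Z(G)` has finite index in
`γ_i(G)` (here `lowerCentralSeries G (i - 1)`). -/
theorem finiteIndex_inf_center_subgroupOf_lowerCentralSeries_of_fg_centralQuotient
    (G : Type*) [Group G] (hfg : Group.FG (G ⧸ Subgroup.center G)) (i : ℕ) (hi : 1 ≤ i)
    (hfin : Finite ((⊤ : Subgroup G).lowerCentralSeries i)) :
    (((⊤ : Subgroup G).lowerCentralSeries (i - 1) ⊓ Subgroup.center G).subgroupOf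
      ((⊤ : Subgroup G).lowerCentralSeries (i - 1))).FiniteIndex := by
  obtain ⟨S, hS⟩ := hfg
  set H := (⊤ : Subgroup G).lowerCentralSeries (i - 1) with hH
  set K := (H ⊓ Subgroup.center G).subgroupOf H with hK
  have hcomm : ∀ h : G, h ∈ H → ∀ g : G, ⁅h, g⁆ ∈ (⊤ : Subgroup G).lowerCentralSeries i := by
    intro h hh g
    have hi' : i - 1 + 1 = i := Nat.succ_pred_eq_of_pos hi
    rw [← hi', Subgroup.lowerCentralSeries_succ]
    exact Subgroup.commutator_mem_commutator hh (Subgroup.mem_top g)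
  let f : H → (S → (⊤ : Subgroup G).lowerCentralSeries i) := fun h s =>
    ⟨⁅(h : G), Quotient.out (s : G ⧸ Subgroup.center G)⁆, hcomm h h.2 _⟩
  -- key commutator identity: ⁅x * k, g⁆ = x * ⁅k, g⁆ * x⁻¹ * ⁅x, g⁆
  have hid : ∀ x k g : G, ⁅x * k, g⁆ = x * ⁅k, g⁆ * x⁻¹ * ⁅x, g⁆ := by
    intro x k g
    simp only [commutatorElement_def]
    group
  have key : ∀ x y : H, f x = f y ↔ (x : G)⁻¹ * y ∈ Subgroup.center G := by
    intro x y
    have hxy : ∀ g : G, (⁅(y : G), g⁆ = ⁅(x : G), g⁆ ↔ ((x : G)⁻¹ * y) * g = g * ((x : G)⁻¹ * y)) := by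
      intro g
      rw [← commutatorElement_eq_one_iff_mul_comm]
      constructor
      · intro h
        have := hid (x : G) ((x : G)⁻¹ * y) g
        rw [mul_inv_cancel_left, h] at this
        have h2 : (x : G) * ⁅(x : G)⁻¹ * (y : G), g⁆ * (x : G)⁻¹ = 1 := by
          rw [← mul_left_inj ⁅(x : G), g⁆, one_mul]
          exact this.symm
        have : ⁅(x : G)⁻¹ * (y : G), g⁆ = 1 := by
          have := congrArg (fun z => (x : G)⁻¹ * z * (x : G)) h2
          simpa [mul_assoc] using this
        exact this
      · intro h
        have := hid (x : G) ((x : G)⁻¹ * y) g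
        rw [mul_inv_cancel_left, h] at this
        rw [this]; group
    constructor
    · intro hf
      refine aux_mem_center _ (S : Set (G ⧸ Subgroup.center G)) hS ?_
      intro s hs
      have := congrFun hf ⟨s, hs⟩
      have heq : ⁅(y : G), Quotient.out s⁆ = ⁅(x : G), Quotient.out s⁆ :=
        (congrArg Subtype.val this).symm
      exact ((hxy (Quotient.out s)).mp heq).symm
    · intro hz
      funext s
      apply Subtype.ext
      show ⁅(x : G), Quotient.out (s : G ⧸ Subgroup.center G)⁆
          = ⁅(y : G), Quotient.out (s : G ⧸ Subgroup.center G)⁆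
      refine ((hxy _).mpr ?_).symm
      exact (Subgroup.mem_center_iff.mp hz _).symm
  have hKiff : ∀ x y : H, x⁻¹ * y ∈ K ↔ (x : G)⁻¹ * y ∈ Subgroup.center G := by
    intro x y
    rw [hK, Subgroup.mem_subgroupOf]
    simp only [Subgroup.mem_inf]
    constructor
    · exact fun h => h.2
    · exact fun h => ⟨(x⁻¹ * y).2, h⟩
  haveI : Finite (H ⧸ K) := by
    have hinj : Function.Injective (Quotient.lift f (fun a b hab => by
        have hab' : a⁻¹ * b ∈ K := QuotientGroup.leftRel_apply.mp hab
        exact (key a b).mpr ((hKiff a b).mp hab')) : H ⧸ K → (S → (⊤ : Subgroup G).lowerCentralSeries i)) := by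
      intro a b
      induction a using Quotient.ind
      induction b using Quotient.ind
      intro h
      apply Quotient.sound
      exact QuotientGroup.leftRel_apply.mpr ((hKiff _ _).mpr ((key _ _).mp h))
    exact Finite.of_injective _ hinj
  exact Subgroup.finiteIndex_of_finite_quotient (H := K)
end

section
/- Let G be a group such that the central quotient G/Z(G) is finitely generated, let i ≥ 1, and suppose that the (i+1)-st term γ_{i+1}(G) of the lower central series of G is finite. Then the i-th term γ_i(G/Z(G)) of the lower central series of the quotient group G/Z(G) is finite. -/
open Subgroup
open scoped commutatorElement

lemma map_lcs_surj {G H : Type*} [Group G] [Group H] (f : G →* H)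
    (hf : Function.Surjective f) (n : ℕ) :
    Subgroup.map f ((⊤ : Subgroup G).lowerCentralSeries n) = (⊤ : Subgroup H).lowerCentralSeries n := by
  induction n with
  | zero =>
    simpa [Subgroup.lowerCentralSeries] using Subgroup.map_top_of_surjective f hf
  | succ n ih =>
    show Subgroup.map f ⁅(⊤ : Subgroup G).lowerCentralSeries n, ⊤⁆ = ⁅(⊤ : Subgroup H).lowerCentralSeries n, ⊤⁆
    rw [Subgroup.map_commutator, ih, Subgroup.map_top_of_surjective f hf]

/-- For a group `G` with `G / Z(G)` finitely generated and `i ≥ 1`, if `γ_{i+1}(G)`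
(here `(⊤ : Subgroup G).lowerCentralSeries i`) is finite, then `γ_i(G / Z(G))`
(here `lowerCentralSeries (G ⧸ Subgroup.center G) (i - 1)`) is finite. -/
theorem finite_lowerCentralSeries_quotient_center_of_finite_lowerCentralSeries
    (G : Type*) [Group G] (hfg : Group.FG (G ⧸ Subgroup.center G)) (i : ℕ) (hi : 1 ≤ i)
    (hfin : Finite ((⊤ : Subgroup G).lowerCentralSeries i)) :
    Finite ((⊤ : Subgroup (G ⧸ Subgroup.center G)).lowerCentralSeries (i - 1)) := by
  obtain ⟨n, rfl⟩ : ∃ n, i = n + 1 := ⟨i - 1, (Nat.succ_pred_eq_of_pos hi).symm⟩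
  simp only [Nat.add_sub_cancel]
  set Z := Subgroup.center G
  set π := QuotientGroup.mk' Z with hπ
  have hsurj : Function.Surjective π := QuotientGroup.mk'_surjective Z
  -- generators
  obtain ⟨S, hS⟩ := hfg.1
  -- lifts of generators
  choose g hg using fun s : S => hsurj s.1
  -- the target set
  have key : (⊤ : Subgroup (G ⧸ Z)).lowerCentralSeries n = Subgroup.map π ((⊤ : Subgroup G).lowerCentralSeries n) :=
    (map_lcs_surj π hsurj n).symm
  rw [key]
  -- build injection
  have hmem : ∀ (x : G), x ∈ (⊤ : Subgroup G).lowerCentralSeries n → ∀ s : S,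
      ⁅x, g s⁆ ∈ (⊤ : Subgroup G).lowerCentralSeries (n + 1) := by
    intro x hx s
    exact Subgroup.commutator_mem_commutator hx (Subgroup.mem_top _)
  set f : Subgroup.map π ((⊤ : Subgroup G).lowerCentralSeries n) → (S → (⊤ : Subgroup G).lowerCentralSeries (n + 1)) :=
    fun q s => ⟨⁅q.2.choose, g s⁆, hmem _ q.2.choose_spec.1 s⟩ with hf
  have hinj : Function.Injective f := by
    intro q q' hqq
    obtain ⟨hx, hpx⟩ := q.2.choose_spec
    obtain ⟨hx', hpx'⟩ := q'.2.choose_spec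
    set x := q.2.choose
    set x' := q'.2.choose
    -- commutators agree
    have hcomm : ∀ s : S, ⁅x, g s⁆ = ⁅x', g s⁆ := by
      intro s
      have := congrFun hqq s
      simpa [hf] using congrArg Subtype.val this
    -- x'⁻¹ * x centralizes each g s
    set z := x'⁻¹ * x with hz
    have hK : ∀ s : S, g s ∈ Subgroup.centralizer {z} := by
      intro s
      rw [Subgroup.mem_centralizer_iff]
      rintro y ⟨rfl⟩
      have h := hcomm s
      simp only [commutatorElement_def] at h
      have h1 : x * g s * x⁻¹ = x' * g s * x'⁻¹ := mul_right_cancel h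
      calc z * g s = x'⁻¹ * (x * g s * x⁻¹) * x := by
            simp [hz, mul_assoc]
        _ = x'⁻¹ * (x' * g s * x'⁻¹) * x := by rw [h1]
        _ = g s * z := by simp [hz, mul_assoc]
    -- centralizer contains center
    set K := Subgroup.centralizer {z}
    have hZK : Z ≤ K := by
      intro z hz
      rw [Subgroup.mem_centralizer_iff]
      rintro y ⟨rfl⟩
      exact (Subgroup.mem_center_iff.mp hz _)
    have hKtop : K = ⊤ := by
      have h1 : Subgroup.closure (S : Set (G ⧸ Z)) ≤ Subgroup.map π K := by
        rw [Subgroup.closure_le]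
        intro s hs
        exact ⟨g ⟨s, hs⟩, hK ⟨s, hs⟩, hg ⟨s, hs⟩⟩
      have h2 : Subgroup.map π K = ⊤ := top_le_iff.mp (hS ▸ h1)
      have h3 := Subgroup.comap_map_eq π K
      rw [h2, Subgroup.comap_top] at h3
      have h4 : (π : G →* G ⧸ Z).ker = Z := QuotientGroup.ker_mk' Z
      rw [h4, sup_of_le_left hZK] at h3
      exact h3.symm
    -- hence z is central
    have hc : z ∈ Z := by
      rw [Subgroup.mem_center_iff]
      intro y
      have : y ∈ K := hKtop ▸ Subgroup.mem_top y
      exact (Subgroup.mem_centralizer_iff.mp this z (Set.mem_singleton z)).symm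
    -- so π x = π x'
    have : π x = π x' := by
      rw [hπ, QuotientGroup.mk'_eq_mk']
      exact ⟨z⁻¹, Subgroup.inv_mem Z hc, by rw [hz]; group⟩
    apply Subtype.ext
    rw [← hpx, ← hpx', this]
  exact Finite.of_injective f hinj
end
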